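/- For any matrix A ∈ Z^{m×n}, κ̄_A ≤ g_∞(A) ≤ n·κ̄_A, where g_∞(A) is the maximum ℓ_∞-norm of an element of the Graver basis of A. -/

import Mathlib

open Finset

variable {ι : Type*} [Fintype ι] [DecidableEq ι]

/-- `y` conforms to `x` if `x i * y i > 0` whenever `y i ≠ 0`. -/
def Conforms (y x : ι → ℝ) : Prop := ∀ i, y i ≠ 0 → x i * y i > 0

/-- An elementary vector of `W`: a support-minimal nonzero vector of `W`. -/
def IsElementary (W : Submodule ℝ (ι → ℝ)) (g : ι → ℝ) : Prop :=
  g ∈ W ∧ g ≠ 0 ∧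
    ∀ h ∈ W, h ≠ 0 → {i | h i ≠ 0} ⊆ {i | g i ≠ 0} → {i | h i ≠ 0} = {i | g i ≠ 0}

/-- The fractional circuit imbalance measure `κ_W`. -/
noncomputable def kappa (W : Submodule ℝ (ι → ℝ)) : ℝ :=
  sSup ({1} ∪ {t : ℝ | ∃ g : ι → ℝ, IsElementary W g ∧
    ∃ i j, g i ≠ 0 ∧ g j ≠ 0 ∧ t = |g j| / |g i|})

/-- An integer elementary vector, normalized so that the gcd of its entries is 1. -/
def IsIntElementary (W : Submodule ℝ (ι → ℝ)) (g : ι → ℤ) : Prop :=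
  IsElementary W (fun i => (g i : ℝ)) ∧ Finset.univ.gcd (fun i => (g i).natAbs) = 1

/-- The max-circuit imbalance measure `κ̄_W`. -/
noncomputable def barKappa (W : Submodule ℝ (ι → ℝ)) : ℕ :=
  sSup {k : ℕ | ∃ g : ι → ℤ, IsIntElementary W g ∧
    k = Finset.univ.sup fun i => (g i).natAbs}

/-- The lcm-circuit imbalance measure `κ̇_W`: the least positive integer divisible by
every entry of every normalized integer elementary vector. -/
noncomputable def dotKappa (W : Submodule ℝ (ι → ℝ)) : ℕ :=
  sInf {k : ℕ | 0 < k ∧ ∀ g : ι → ℤ, IsIntElementary W g → ∀ i, g i ≠ 0 → (g i).natAbs ∣ k}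

/-- A rational linear subspace: one spanned by rational vectors. -/
def IsRationalSubspace (W : Submodule ℝ (ι → ℝ)) : Prop :=
  ∃ S : Set (ι → ℚ), W = Submodule.span ℝ ((fun v : ι → ℚ => fun i => ((v i : ℝ))) '' S)

/-- The orthogonal complement of `W` in `ℝ^ι` with the standard inner product. -/
def orthComp (W : Submodule ℝ (ι → ℝ)) : Submodule ℝ (ι → ℝ) where
  carrier := {v | ∀ w ∈ W, ∑ i, v i * w i = 0}
  add_mem' := by
    intro a b ha hb w hw
    have := ha w hw
    have := hb w hw
    simp only [Set.mem_setOf_eq, Pi.add_apply, add_mul, Finset.sum_add_distrib, *]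
    ring
  zero_mem' := by intro w hw; simp
  smul_mem' := by
    intro c a ha w hw
    have h := ha w hw
    simp only [Set.mem_setOf_eq, Pi.smul_apply, smul_eq_mul, mul_assoc, ← Finset.mul_sum, h,
      mul_zero]

/-- `g` is an element of the Graver basis of `A`: a nonzero integer kernel element such
that no other nonzero integer kernel element conformal with `g` is entrywise dominated
by `g`. -/
def InGraverBasis {m n : ℕ} (A : Matrix (Fin m) (Fin n) ℤ) (g : Fin n → ℤ) : Prop :=
  A.mulVec g = 0 ∧ g ≠ 0 ∧
    ∀ h : Fin n → ℤ, A.mulVec h = 0 → h ≠ 0 → h ≠ g →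
      (∀ i, h i ≠ 0 → 0 < g i * h i) → ¬ (∀ i, |h i| ≤ |g i|)

/-- `𝔤_∞(A)`: the maximum `ℓ_∞` norm of an element of the Graver basis of `A`. -/
noncomputable def graverMaxInf {m n : ℕ} (A : Matrix (Fin m) (Fin n) ℤ) : ℕ :=
  sSup {k : ℕ | ∃ g : Fin n → ℤ, InGraverBasis A g ∧
    k = Finset.univ.sup fun i => (g i).natAbs}


set_option linter.unusedSectionVars false
set_option maxHeartbeats 1000000

open Matrix in
/-- If an integer matrix has a nonzero real kernel vector, it has a nonzero integer one. -/
lemma int_kernel_of_real_kernel {ι' : Type*} [Fintype ι'] (M : Matrix ι' ι ℤ)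
    (v : ι → ℝ) (hv : v ≠ 0) (hMv : (M.map (Int.cast : ℤ → ℝ)).mulVec v = 0) :
    ∃ g : ι → ℤ, g ≠ 0 ∧ M.mulVec g = 0 := by
  set N : Matrix ι ι ℤ := Mᵀ * M with hN
  have hmap : N.map (Int.cast : ℤ → ℝ) = (M.map (Int.cast : ℤ → ℝ))ᵀ * M.map (Int.cast : ℤ → ℝ) := by
    rw [hN, show (Int.cast : ℤ → ℝ) = ((Int.castRingHom ℝ : ℤ →+* ℝ) : ℤ → ℝ) from rfl,
      Matrix.map_mul, Matrix.transpose_map]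
  have hdetR : (N.map (Int.cast : ℤ → ℝ)).det = 0 := by
    rw [← Matrix.exists_mulVec_eq_zero_iff]
    exact ⟨v, hv, by rw [hmap, ← Matrix.mulVec_mulVec, hMv, Matrix.mulVec_zero]⟩
  have hdet : N.det = 0 := by
    have h2 : ((N.det : ℤ) : ℝ) = 0 := by
      rw [show ((N.det : ℤ) : ℝ) = (Int.castRingHom ℝ) N.det from rfl, RingHom.map_det]
      exact hdetR
    exact_mod_cast h2
  obtain ⟨g, hg0, hgN⟩ := Matrix.exists_mulVec_eq_zero_iff.mpr hdet
  refine ⟨g, hg0, ?_⟩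
  have hdot : dotProduct (M.mulVec g) (M.mulVec g) = 0 := by
    have h1 : dotProduct g (N.mulVec g) = 0 := by rw [hgN, dotProduct_zero]
    rw [hN, ← Matrix.mulVec_mulVec, dotProduct_mulVec, Matrix.vecMul_transpose] at h1
    exact h1
  have : ∀ j, M.mulVec g j = 0 := by
    intro j
    have hsum : ∑ k, M.mulVec g k * M.mulVec g k = 0 := hdot
    have := (Finset.sum_eq_zero_iff_of_nonneg (fun k _ => mul_self_nonneg _)).mp hsum j (Finset.mem_univ j)
    exact mul_self_eq_zero.mp this
  funext j; exact this j

lemma elem_prop {W : Submodule ℝ (ι → ℝ)} {e : ι → ℝ} (he : IsElementary W e) {h : ι → ℝ}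
    (hh : h ∈ W) (hsupp : {i | h i ≠ 0} ⊆ {i | e i ≠ 0}) (j : ι) (hj : e j ≠ 0) :
    (h j) • e = (e j) • h := by
  by_contra hne
  set w := (h j) • e - (e j) • h with hw
  have hwW : w ∈ W := W.sub_mem (W.smul_mem _ he.1) (W.smul_mem _ hh)
  have hw0 : w ≠ 0 := sub_ne_zero.mpr hne
  have hsub : {i | w i ≠ 0} ⊆ {i | e i ≠ 0} := by
    intro i hi
    simp only [Set.mem_setOf_eq] at hi ⊢
    by_contra h0
    have h0' : e i = 0 := h0
    have hh0 : h i = 0 := by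
      by_contra hh0; exact (hsupp hh0) h0'
    apply hi
    simp [hw, h0', hh0]
  have heq := he.2.2 w hwW hw0 hsub
  have hj' : j ∈ {i | e i ≠ 0} := hj
  rw [← heq] at hj'
  apply hj'
  simp only [hw, Pi.sub_apply, Pi.smul_apply, smul_eq_mul]
  ring

lemma cast_fun_ne_zero {g : ι → ℤ} (h : g ≠ 0) : (fun i => (g i : ℝ)) ≠ 0 := by
  intro hc
  apply h
  funext i
  show g i = 0
  exact_mod_cast (by simpa using congrFun hc i : (g i : ℝ) = 0)

/-- An integer vector conformal to and dominated by a normalized integer elementary vector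
equals it. -/
lemma intElementary_unique {W : Submodule ℝ (ι → ℝ)} {g h : ι → ℤ}
    (hg : IsIntElementary W g) (hmem : (fun i => (h i : ℝ)) ∈ W) (hh0 : h ≠ 0)
    (hconf : ∀ i, h i ≠ 0 → 0 < g i * h i) (hle : ∀ i, |h i| ≤ |g i|) : h = g := by
  obtain ⟨j, hj⟩ : ∃ j, h j ≠ 0 := Function.ne_iff.mp hh0
  have hgj : g j ≠ 0 := fun h0 => by simpa [h0] using hconf j hj
  have hsupp : {i | (h i : ℝ) ≠ 0} ⊆ {i | (g i : ℝ) ≠ 0} := by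
    intro i hi
    simp only [Set.mem_setOf_eq, Int.cast_ne_zero] at hi ⊢
    exact fun h0 => by simpa [h0] using hconf i hi
  have hprop := elem_prop hg.1 hmem hsupp j (by exact_mod_cast hgj)
  have hkey : ∀ i, h j * g i = g j * h i := by
    intro i
    have := congrFun hprop i
    simp only [Pi.smul_apply, smul_eq_mul] at this
    exact_mod_cast this
  have hdvd : (g j).natAbs ∣ (h j).natAbs := by
    have h1 : (g j).natAbs ∣ Finset.univ.gcd fun i => (h j).natAbs * (g i).natAbs := by
      apply Finset.dvd_gcd
      intro i _
      rw [← Int.natAbs_mul, hkey i, Int.natAbs_mul]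
      exact dvd_mul_right _ _
    rw [Finset.gcd_mul_left, hg.2, mul_one] at h1
    simpa using h1
  have hja : (h j).natAbs ≤ (g j).natAbs := by
    have := hle j
    rw [Int.abs_eq_natAbs, Int.abs_eq_natAbs] at this
    exact_mod_cast this
  have habs : (h j).natAbs = (g j).natAbs :=
    le_antisymm hja (Nat.le_of_dvd (Int.natAbs_pos.mpr hj) hdvd)
  have hjeq : h j = g j := by
    rcases Int.natAbs_eq_natAbs_iff.mp habs with h' | h'
    · exact h'
    · exfalso
      have := hconf j hj
      rw [h'] at this
      nlinarith [sq_nonneg (g j)]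
  funext i
  have := hkey i
  rw [hjeq] at this
  exact (mul_left_cancel₀ hgj this).symm

/-- Two normalized integer elementary vectors with the same support agree up to sign. -/
lemma intElementary_sign {W : Submodule ℝ (ι → ℝ)} {g h : ι → ℤ}
    (hg : IsIntElementary W g) (hh : IsIntElementary W h)
    (hsupp : ∀ i, h i ≠ 0 ↔ g i ≠ 0) : h = g ∨ h = -g := by
  have hh0 : h ≠ 0 := by
    intro h0
    exact hh.1.2.1 (by funext i; simp [h0])
  obtain ⟨j, hj⟩ : ∃ j, h j ≠ 0 := Function.ne_iff.mp hh0
  have hgj : g j ≠ 0 := (hsupp j).mp hj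
  have hsupp' : {i | (h i : ℝ) ≠ 0} ⊆ {i | (g i : ℝ) ≠ 0} := by
    intro i hi
    simp only [Set.mem_setOf_eq, Int.cast_ne_zero] at hi ⊢
    exact (hsupp i).mp hi
  have hprop := elem_prop hg.1 hh.1.1 hsupp' j (by exact_mod_cast hgj)
  have hkey : ∀ i, h j * g i = g j * h i := by
    intro i
    have := congrFun hprop i
    simp only [Pi.smul_apply, smul_eq_mul] at this
    exact_mod_cast this
  have hdvd1 : (g j).natAbs ∣ (h j).natAbs := by
    have h1 : (g j).natAbs ∣ Finset.univ.gcd fun i => (h j).natAbs * (g i).natAbs := by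
      apply Finset.dvd_gcd
      intro i _
      rw [← Int.natAbs_mul, hkey i, Int.natAbs_mul]
      exact dvd_mul_right _ _
    rw [Finset.gcd_mul_left, hg.2, mul_one] at h1
    simpa using h1
  have hdvd2 : (h j).natAbs ∣ (g j).natAbs := by
    have h1 : (h j).natAbs ∣ Finset.univ.gcd fun i => (g j).natAbs * (h i).natAbs := by
      apply Finset.dvd_gcd
      intro i _
      rw [← Int.natAbs_mul, ← hkey i, Int.natAbs_mul]
      exact dvd_mul_right _ _
    rw [Finset.gcd_mul_left, hh.2, mul_one] at h1
    simpa using h1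
  have habs : (h j).natAbs = (g j).natAbs := Nat.dvd_antisymm hdvd2 hdvd1
  rcases Int.natAbs_eq_natAbs_iff.mp habs with h' | h'
  · left
    funext i
    have := hkey i
    rw [h'] at this
    exact (mul_left_cancel₀ hgj this).symm
  · right
    funext i
    have := hkey i
    rw [h'] at this
    have h2 : g j * (-g i) = g j * h i := by linarith [this]
    have := mul_left_cancel₀ hgj h2
    simp [← this]

lemma cast_mulVec_eq {ι' : Type*} [Fintype ι'] (M : Matrix ι' ι ℤ) (g : ι → ℤ) :
    (M.map (Int.cast : ℤ → ℝ)).mulVec (fun i => (g i : ℝ)) = fun r => ((M.mulVec g r : ℤ) : ℝ) := by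
  funext r
  simp only [Matrix.mulVec, dotProduct, Matrix.map_apply]
  push_cast
  rfl

lemma cast_mem_ker_iff {ι' : Type*} [Fintype ι'] (M : Matrix ι' ι ℤ) (g : ι → ℤ) :
    ((fun i => (g i : ℝ)) ∈ LinearMap.ker (M.map (Int.cast : ℤ → ℝ)).mulVecLin) ↔
      M.mulVec g = 0 := by
  rw [LinearMap.mem_ker, Matrix.mulVecLin_apply, cast_mulVec_eq]
  constructor
  · intro h
    funext r
    have := congrFun h r
    simpa using this
  · intro h
    funext r
    simp [h]

open scoped Classical in
noncomputable def suppF (v : ι → ℝ) : Finset ι := Finset.univ.filter fun i => v i ≠ 0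

lemma mem_suppF {v : ι → ℝ} {i : ι} : i ∈ suppF v ↔ v i ≠ 0 := by
  classical simp [suppF]

lemma suppF_nonempty {v : ι → ℝ} (hv : v ≠ 0) : (suppF v).Nonempty := by
  obtain ⟨i, hi⟩ := Function.ne_iff.mp hv
  exact ⟨i, mem_suppF.mpr hi⟩

/-- In the conformal cone of `v`, a support-minimal vector is elementary. -/
lemma exists_conformal_elementary {W : Submodule ℝ (ι → ℝ)} {v : ι → ℝ}
    (hvW : v ∈ W) (hv : v ≠ 0) :
    ∃ e, IsElementary W e ∧ (∀ i, 0 ≤ v i * e i) ∧ (∀ i, e i ≠ 0 → v i ≠ 0) := by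
  classical
  set C : Set (ι → ℝ) := {x | x ∈ W ∧ x ≠ 0 ∧ ∀ i, 0 ≤ v i * x i ∧ (x i ≠ 0 → v i ≠ 0)}
    with hC
  have hvC : v ∈ C := ⟨hvW, hv, fun i => ⟨mul_self_nonneg _, fun _ => by
    intro h0; simp_all⟩⟩
  set K : Set ℕ := {k | ∃ x ∈ C, (suppF x).card = k} with hK
  have hKne : K.Nonempty := ⟨_, v, hvC, rfl⟩
  obtain ⟨x, hxC, hxcard⟩ : ∃ x ∈ C, (suppF x).card = sInf K := Nat.sInf_mem hKne
  obtain ⟨hxW, hx0, hxcone⟩ := hxC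
  refine ⟨x, ⟨hxW, hx0, ?_⟩, fun i => (hxcone i).1, fun i => (hxcone i).2⟩
  intro y hyW hy0 hysub
  by_contra hne
  -- supp y ⊊ supp x; build a smaller-support cone vector
  have hysubF : suppF y ⊆ suppF x := fun i hi =>
    mem_suppF.mpr (hysub (mem_suppF.mp hi))
  have hyne : suppF y ≠ suppF x := by
    intro h
    apply hne
    ext i
    simp only [Set.mem_setOf_eq, ← mem_suppF, h]
  obtain ⟨i1, hi1x, hi1y⟩ : ∃ i, i ∈ suppF x ∧ i ∉ suppF y := by
    by_contra hc
    push_neg at hc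
    exact hyne (Finset.Subset.antisymm hysubF fun i hi => hc i hi)
  have hTne : (suppF y).Nonempty := suppF_nonempty hy0
  obtain ⟨i0, hi0T, hi0min⟩ := Finset.exists_min_image (suppF y) (fun i => |x i| / |y i|) hTne
  have hyi0 : y i0 ≠ 0 := mem_suppF.mp hi0T
  have hxi0 : x i0 ≠ 0 := mem_suppF.mp (hysubF hi0T)
  set s : ℝ := x i0 / y i0 with hs
  have hs0 : s ≠ 0 := div_ne_zero hxi0 hyi0
  set x' : ι → ℝ := x - s • y with hx'
  have hx'W : x' ∈ W := W.sub_mem hxW (W.smul_mem _ hyW)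
  -- key bound
  have hkey : ∀ i, |s * y i| ≤ |x i| := by
    intro i
    by_cases hyi : y i = 0
    · simp [hyi]
    · have hiT : i ∈ suppF y := mem_suppF.mpr hyi
      have hmin := hi0min i hiT
      have h1 : |s| = |x i0| / |y i0| := by rw [hs, abs_div]
      have h2 : |s * y i| = |s| * |y i| := abs_mul _ _
      rw [h2, h1]
      have hyabs : (0:ℝ) < |y i| := abs_pos.mpr hyi
      calc |x i0| / |y i0| * |y i| ≤ |x i| / |y i| * |y i| := by
            apply mul_le_mul_of_nonneg_right hmin (le_of_lt hyabs)
        _ = |x i| := div_mul_cancel₀ _ (ne_of_gt hyabs)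
  have hx'i0 : x' i0 = 0 := by
    simp only [hx', Pi.sub_apply, Pi.smul_apply, smul_eq_mul, hs]
    field_simp
    ring
  have hx'suppsub : suppF x' ⊆ suppF x := by
    intro i hi
    rw [mem_suppF] at hi ⊢
    intro hxi
    apply hi
    have hyi : y i = 0 := by
      by_contra hyi
      exact (mem_suppF.mp (hysubF (mem_suppF.mpr hyi))) hxi
    simp [hx', hxi, hyi]
  have hx'0 : x' ≠ 0 := by
    intro h0
    have hxy : x = s • y := by
      have := sub_eq_zero.mp h0
      exact this
    have hxi1 : x i1 ≠ 0 := mem_suppF.mp hi1x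
    have hyi1 : y i1 = 0 := by
      by_contra hc; exact hi1y (mem_suppF.mpr hc)
    apply hxi1
    have := congrFun hxy i1
    simpa [hyi1] using this
  have hx'cone : ∀ i, 0 ≤ v i * x' i ∧ (x' i ≠ 0 → v i ≠ 0) := by
    intro i
    by_cases hyi : y i = 0
    · have hxi' : x' i = x i := by simp [hx', hyi]
      rw [hxi']
      exact hxcone i
    · have hxi : x i ≠ 0 := mem_suppF.mp (hysubF (mem_suppF.mpr hyi))
      have hvi : v i ≠ 0 := (hxcone i).2 hxi
      have hvx : 0 < v i * x i := lt_of_le_of_ne (hxcone i).1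
        (by intro h; exact (mul_ne_zero hvi hxi) h.symm)
      have hb := hkey i
      have hx'i : x' i = x i - s * y i := by simp [hx']
      constructor
      · rw [hx'i]
        have h1 : |v i * (s * y i)| ≤ |v i * x i| := by
          rw [abs_mul, abs_mul (v i)]
          exact mul_le_mul_of_nonneg_left hb (abs_nonneg _)
        have h2 : |v i * x i| = v i * x i := abs_of_pos hvx
        have h3 : v i * (s * y i) ≤ v i * x i := le_trans (le_abs_self _) (h2 ▸ h1)
        nlinarith
      · intro _; exact hvi
  have hx'C : x' ∈ C := ⟨hx'W, hx'0, hx'cone⟩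
  have hcardlt : (suppF x').card < (suppF x).card := by
    apply Finset.card_lt_card
    refine ⟨hx'suppsub, fun hsub => ?_⟩
    have : i0 ∈ suppF x' := hsub (hysubF hi0T)
    exact (mem_suppF.mp this) hx'i0
  have : sInf K ≤ (suppF x').card := Nat.sInf_le ⟨x', hx'C, rfl⟩
  omega

/-- Peel one conformal elementary vector off `v`. -/
lemma peel {W : Submodule ℝ (ι → ℝ)} {v : ι → ℝ} (hvW : v ∈ W) (hv : v ≠ 0) :
    ∃ e α, IsElementary W e ∧ 0 < α ∧ (∀ i, e i ≠ 0 → 0 < v i * e i) ∧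
      (∀ i, |α * e i| ≤ |v i|) ∧ (v - α • e) ∈ W ∧
      (∀ i, 0 ≤ v i * (v - α • e) i ∧ |(v - α • e) i| ≤ |v i|) ∧
      (suppF (v - α • e)).card < (suppF v).card := by
  classical
  obtain ⟨e, he, hge, himp⟩ := exists_conformal_elementary hvW hv
  have hconf : ∀ i, e i ≠ 0 → 0 < v i * e i := by
    intro i hi
    exact lt_of_le_of_ne (hge i) fun h => (mul_ne_zero (himp i hi) hi) h.symm
  have hTne : (suppF e).Nonempty := suppF_nonempty he.2.1
  obtain ⟨i0, hi0T, hi0min⟩ := Finset.exists_min_image (suppF e) (fun i => v i / e i) hTne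
  have hei0 : e i0 ≠ 0 := mem_suppF.mp hi0T
  set α : ℝ := v i0 / e i0 with hα
  have hratio_pos : ∀ i, e i ≠ 0 → 0 < v i / e i := by
    intro i hi
    rcases mul_pos_iff.mp (hconf i hi) with ⟨h1, h2⟩ | ⟨h1, h2⟩
    · exact div_pos h1 h2
    · exact div_pos_of_neg_of_neg h1 h2
  have hαpos : 0 < α := hratio_pos i0 hei0
  have hratio_abs : ∀ i, e i ≠ 0 → v i / e i = |v i| / |e i| := by
    intro i hi
    rw [← abs_div]
    exact (abs_of_pos (hratio_pos i hi)).symm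
  -- key entrywise bound
  have hkey : ∀ i, |α * e i| ≤ |v i| := by
    intro i
    by_cases hei : e i = 0
    · simp [hei, abs_nonneg]
    · have hmin := hi0min i (mem_suppF.mpr hei)
      have heabs : (0:ℝ) < |e i| := abs_pos.mpr hei
      have h1 : |α * e i| = α * |e i| := by
        rw [abs_mul, abs_of_pos hαpos]
      rw [h1]
      calc α * |e i| ≤ (v i / e i) * |e i| :=
            mul_le_mul_of_nonneg_right hmin (le_of_lt heabs)
        _ = (|v i| / |e i|) * |e i| := by rw [hratio_abs i hei]
        _ = |v i| := div_mul_cancel₀ _ (ne_of_gt heabs)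
  have hsub : ∀ i, (v - α • e) i = v i - α * e i := fun i => by simp
  have hv'W : (v - α • e) ∈ W := W.sub_mem hvW (W.smul_mem _ he.1)
  have hcone : ∀ i, 0 ≤ v i * (v - α • e) i ∧ |(v - α • e) i| ≤ |v i| := by
    intro i
    rw [hsub i]
    by_cases hei : e i = 0
    · simp only [hei, mul_zero, sub_zero]
      exact ⟨mul_self_nonneg _, le_refl _⟩
    · have hvi : v i ≠ 0 := himp i hei
      have hvx : 0 < v i * e i := hconf i hei
      have hb := hkey i
      have h1 : |v i * (α * e i)| ≤ |v i * v i| := by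
        rw [abs_mul, abs_mul (v i)]
        exact mul_le_mul_of_nonneg_left hb (abs_nonneg _)
      have h2 : 0 < v i * (α * e i) := by nlinarith
      have h3 : v i * (α * e i) ≤ v i * v i := by
        have := le_trans (le_abs_self _) h1
        rwa [abs_mul_self] at this
      constructor
      · nlinarith
      · have habs : (v i - α * e i) ^ 2 ≤ |v i| ^ 2 := by
          rw [sq_abs]
          nlinarith
        exact abs_le_of_sq_le_sq habs (abs_nonneg _)
  have hcard : (suppF (v - α • e)).card < (suppF v).card := by
    apply Finset.card_lt_card
    constructor
    · intro i hi
      rw [mem_suppF] at hi ⊢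
      intro hvi
      apply hi
      have hei : e i = 0 := by
        by_contra hei; exact (himp i hei) hvi
      rw [hsub i, hvi, hei, mul_zero, sub_zero]
    · intro hsubs
      have hvi0 : v i0 ≠ 0 := himp i0 hei0
      have : i0 ∈ suppF (v - α • e) := hsubs (mem_suppF.mpr hvi0)
      apply mem_suppF.mp this
      rw [hsub i0, hα]
      field_simp
      ring
  exact ⟨e, α, he, hαpos, hconf, hkey, hv'W, hcone, hcard⟩

lemma list_sum_apply (l : List (ι → ℝ)) (i : ι) : l.sum i = (l.map fun f => f i).sum := by
  induction l with
  | nil => rfl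
  | cons a t ih => simp [ih]

/-- Conformal decomposition of a kernel vector into elementary vectors. -/
lemma conformal_decomp {W : Submodule ℝ (ι → ℝ)} :
    ∀ (N : ℕ) (v : ι → ℝ), v ∈ W → v ≠ 0 → (suppF v).card ≤ N →
    ∃ l : List ((ι → ℝ) × ℝ), l ≠ [] ∧ l.length ≤ (suppF v).card ∧
      v = (l.map fun p => p.2 • p.1).sum ∧
      ∀ p ∈ l, IsElementary W p.1 ∧ 0 < p.2 ∧ (∀ i, p.1 i ≠ 0 → 0 < v i * p.1 i) ∧
        ∀ i, |p.2 * p.1 i| ≤ |v i| := by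
  intro N
  induction N with
  | zero =>
    intro v _ hv hcard
    exfalso
    obtain ⟨i, hi⟩ := suppF_nonempty hv
    have : 0 < (suppF v).card := Finset.card_pos.mpr ⟨i, hi⟩
    omega
  | succ M ih =>
    intro v hvW hv hcard
    obtain ⟨e, α, he, hαpos, hconf, hkey, hv'W, hcone, hcardlt⟩ := peel hvW hv
    by_cases hv'0 : v - α • e = 0
    · refine ⟨[(e, α)], by simp, ?_, ?_, ?_⟩
      · have : 0 < (suppF v).card := Finset.card_pos.mpr (suppF_nonempty hv)
        simpa using this
      · have : v = α • e := by
          have := sub_eq_zero.mp hv'0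
          exact this
        simpa using this
      · rintro p hp
        rw [List.mem_singleton] at hp
        subst hp
        exact ⟨he, hαpos, hconf, hkey⟩
    · have hcard' : (suppF (v - α • e)).card ≤ M := by omega
      obtain ⟨l', hl'ne, hl'len, hl'sum, hl'prop⟩ := ih (v - α • e) hv'W hv'0 hcard'
      refine ⟨(e, α) :: l', by simp, ?_, ?_, ?_⟩
      · simp only [List.length_cons]
        omega
      · simp only [List.map_cons, List.sum_cons]
        rw [← hl'sum]
        abel
      · rintro p hp
        rcases List.mem_cons.mp hp with hp | hp
        · subst hp
          exact ⟨he, hαpos, hconf, hkey⟩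
        · obtain ⟨hel, hpos, hconf', hkey'⟩ := hl'prop p hp
          refine ⟨hel, hpos, ?_, ?_⟩
          · intro i hi
            have h1 := hconf' i hi
            have hv'i : (v - α • e) i ≠ 0 := by
              intro h0; rw [h0] at h1; simp at h1
            have hvi : v i ≠ 0 := by
              intro h0
              have := (hcone i).2
              rw [h0] at this
              simp only [abs_zero] at this
              exact hv'i (abs_eq_zero.mp (le_antisymm this (abs_nonneg _)))
            have h2 : 0 < v i * (v - α • e) i :=
              lt_of_le_of_ne (hcone i).1 fun h => (mul_ne_zero hvi hv'i) h.symm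
            nlinarith [mul_pos h2 h1, mul_self_nonneg ((v - α • e) i)]
          · intro i
            exact le_trans (hkey' i) (hcone i).2

/-- The set of sup-norms of normalized integer elementary vectors is bounded above. -/
lemma bddAbove_kappaSet (W : Submodule ℝ (ι → ℝ)) :
    BddAbove {k : ℕ | ∃ g : ι → ℤ, IsIntElementary W g ∧
      k = Finset.univ.sup fun i => (g i).natAbs} := by
  classical
  set φ : Finset ι → ℕ := fun s =>
    sSup {k : ℕ | ∃ g : ι → ℤ, IsIntElementary W g ∧
      (Finset.univ.filter fun i => g i ≠ 0) = s ∧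
      k = Finset.univ.sup fun i => (g i).natAbs} with hφ
  apply BddAbove.mono _ (Set.finite_range φ).bddAbove
  rintro k ⟨g, hg, hk⟩
  refine ⟨Finset.univ.filter fun i => g i ≠ 0, ?_⟩
  rw [hφ]
  have : {k' : ℕ | ∃ g' : ι → ℤ, IsIntElementary W g' ∧
      (Finset.univ.filter fun i => g' i ≠ 0) = (Finset.univ.filter fun i => g i ≠ 0) ∧
      k' = Finset.univ.sup fun i => (g' i).natAbs} = {k} := by
    apply Set.eq_singleton_iff_unique_mem.mpr
    refine ⟨⟨g, hg, rfl, hk⟩, ?_⟩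
    rintro k' ⟨g', hg', hs, hk'⟩
    have hsupp : ∀ i, g' i ≠ 0 ↔ g i ≠ 0 := by
      intro i
      constructor
      · intro h
        have : i ∈ Finset.univ.filter fun i => g i ≠ 0 := by
          rw [← hs]; simp [h]
        simpa using this
      · intro h
        have : i ∈ Finset.univ.filter fun i => g' i ≠ 0 := by
          rw [hs]; simp [h]
        simpa using this
    rcases intElementary_sign hg hg' hsupp with h | h
    · rw [hk', hk, h]
    · rw [hk', hk, h]; simp
  simp only []
  show sSup _ = k
  rw [this, csSup_singleton]

open Matrix in
/-- Every elementary vector of the kernel of an integer matrix is a positive multiple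
of a normalized integer elementary vector. -/
lemma elementary_int_normalize {ι' : Type*} [Fintype ι'] (M : Matrix ι' ι ℤ)
    {e : ι → ℝ} (he : IsElementary (LinearMap.ker (M.map (Int.cast : ℤ → ℝ)).mulVecLin) e) :
    ∃ (g : ι → ℤ) (c : ℝ), 0 < c ∧
      IsIntElementary (LinearMap.ker (M.map (Int.cast : ℤ → ℝ)).mulVecLin) g ∧
      (fun i => (g i : ℝ)) = c • e := by
  classical
  set W := LinearMap.ker (M.map (Int.cast : ℤ → ℝ)).mulVecLin with hW
  set S : Finset ι := suppF e with hS
  set M' : Matrix (ι' ⊕ ι) ι ℤ := Matrix.of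
    (Sum.elim (fun r => M r) (fun i j => if i ∈ S then 0 else if j = i then 1 else 0)) with hM'
  have heker : (M.map (Int.cast : ℤ → ℝ)).mulVec e = 0 := he.1
  have hreal : (M'.map (Int.cast : ℤ → ℝ)).mulVec e = 0 := by
    funext r
    cases r with
    | inl r =>
      have := congrFun heker r
      simpa [hM', Matrix.mulVec, dotProduct, Matrix.map_apply] using this
    | inr i =>
      by_cases hiS : i ∈ S
      · simp [hM', Matrix.mulVec, dotProduct, Matrix.map_apply, hiS]
      · have hei : e i = 0 := by
          by_contra hei
          exact hiS (mem_suppF.mpr hei)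
        simp [hM', Matrix.mulVec, dotProduct, Matrix.map_apply, hiS, ite_mul, hei]
  obtain ⟨h, hh0, hMh'⟩ := int_kernel_of_real_kernel M' e he.2.1 hreal
  have hMh : M.mulVec h = 0 := by
    funext r
    have := congrFun hMh' (Sum.inl r)
    simpa [hM', Matrix.mulVec, dotProduct] using this
  have hhS : ∀ i, i ∉ S → h i = 0 := by
    intro i hiS
    have := congrFun hMh' (Sum.inr i)
    simpa [hM', Matrix.mulVec, dotProduct, hiS, ite_mul] using this
  have hmemh : (fun i => (h i : ℝ)) ∈ W := (cast_mem_ker_iff M h).mpr hMh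
  have hcasth0 : (fun i => (h i : ℝ)) ≠ 0 := cast_fun_ne_zero hh0
  have hsupph : {i | (h i : ℝ) ≠ 0} ⊆ {i | e i ≠ 0} := by
    intro i hi
    simp only [Set.mem_setOf_eq, Int.cast_ne_zero] at hi
    by_contra hei
    exact hi (hhS i fun hmem => hei (mem_suppF.mp hmem))
  have hsuppeq : {i | (h i : ℝ) ≠ 0} = {i | e i ≠ 0} :=
    he.2.2 _ hmemh hcasth0 hsupph
  -- normalize by the gcd
  set d : ℕ := Finset.univ.gcd (fun i => (h i).natAbs) with hd
  have hd0 : d ≠ 0 := by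
    intro h0
    apply hh0
    funext i
    have := Finset.gcd_eq_zero_iff.mp h0 i (Finset.mem_univ i)
    exact Int.natAbs_eq_zero.mp this
  have hdvd : ∀ i, (d : ℤ) ∣ h i := by
    intro i
    refine Int.natAbs_dvd_natAbs.mp ?_
    simpa using Finset.gcd_dvd (Finset.mem_univ i)
  set g₀ : ι → ℤ := fun i => h i / (d : ℤ) with hg₀
  have heq : ∀ i, h i = (d : ℤ) * g₀ i := fun i => (Int.mul_ediv_cancel' (hdvd i)).symm
  have hnat : ∀ i, (h i).natAbs = d * (g₀ i).natAbs := by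
    intro i
    rw [heq i, Int.natAbs_mul]
    simp
  have hgcd1 : Finset.univ.gcd (fun i => (g₀ i).natAbs) = 1 := by
    have h1 : d = Finset.univ.gcd (fun i => d * (g₀ i).natAbs) :=
      Finset.gcd_congr rfl (fun i _ => hnat i)
    rw [Finset.gcd_mul_left] at h1
    simp only [normalize_eq] at h1
    have h2 : d * 1 = d * Finset.univ.gcd (fun i => (g₀ i).natAbs) := by
      rw [mul_one]; exact h1
    exact (Nat.eq_of_mul_eq_mul_left (Nat.pos_of_ne_zero hd0) h2).symm
  have hdR : ((d : ℤ) : ℝ) ≠ 0 := by exact_mod_cast fun h0 => hd0 (by exact_mod_cast h0)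
  have hcast : (fun i => (g₀ i : ℝ)) = ((d : ℝ))⁻¹ • (fun i => (h i : ℝ)) := by
    funext i
    have : ((h i : ℤ) : ℝ) = (d : ℝ) * (g₀ i : ℝ) := by exact_mod_cast congrArg Int.cast (heq i)
    simp only [Pi.smul_apply, smul_eq_mul]
    field_simp [this]
    push_cast at this ⊢
    linarith
  have hmemg₀ : (fun i => (g₀ i : ℝ)) ∈ W := by
    rw [hcast]; exact W.smul_mem _ hmemh
  have hsuppg₀ : {i | (g₀ i : ℝ) ≠ 0} = {i | e i ≠ 0} := by
    rw [← hsuppeq]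
    ext i
    simp only [Set.mem_setOf_eq, Int.cast_ne_zero]
    constructor
    · intro hgi hhi
      apply hgi
      rw [heq i] at hhi
      rcases mul_eq_zero.mp hhi with h' | h'
      · exact absurd h' (by exact_mod_cast hd0)
      · exact h'
    · intro hhi hgi
      exact hhi (by rw [heq i, hgi, mul_zero])
  have hg₀0 : (fun i => (g₀ i : ℝ)) ≠ 0 := by
    intro h0
    obtain ⟨j, hj'⟩ := Function.ne_iff.mp he.2.1
    have hj : e j ≠ 0 := by simpa using hj'
    have h1 : j ∈ {i | (g₀ i : ℝ) ≠ 0} := by rw [hsuppg₀]; exact hj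
    exact h1 (by simpa using congrFun h0 j)
  have helem : IsElementary W (fun i => (g₀ i : ℝ)) := by
    refine ⟨hmemg₀, hg₀0, ?_⟩
    intro h' hh'W hh'0 hsub
    rw [hsuppg₀] at hsub ⊢
    exact he.2.2 h' hh'W hh'0 hsub
  obtain ⟨j, hj'⟩ := Function.ne_iff.mp he.2.1
  have hj : e j ≠ 0 := by simpa using hj'
  have hg₀j : g₀ j ≠ 0 := by
    have h1 : j ∈ {i | (g₀ i : ℝ) ≠ 0} := by rw [hsuppg₀]; exact hj
    exact_mod_cast h1
  have hprop := elem_prop he hmemg₀ (le_of_eq hsuppg₀) j hj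
  -- (g₀ j) • e = (e j) • g₀cast
  have hc : (fun i => (g₀ i : ℝ)) = ((g₀ j : ℝ) / e j) • e := by
    funext i
    have := congrFun hprop i
    simp only [Pi.smul_apply, smul_eq_mul] at this ⊢
    rw [div_mul_eq_mul_div, eq_div_iff hj]
    linarith [this]
  set c₀ : ℝ := (g₀ j : ℝ) / e j with hc₀
  have hc₀0 : c₀ ≠ 0 := div_ne_zero (by exact_mod_cast hg₀j) hj
  rcases lt_or_gt_of_ne hc₀0 with hneg | hpos
  · refine ⟨-g₀, -c₀, by linarith, ⟨?_, ?_⟩, ?_⟩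
    · refine ⟨?_, ?_, ?_⟩
      · show (fun i => ((-g₀) i : ℝ)) ∈ W
        have heqn : (fun i => (((-g₀) i : ℤ) : ℝ)) = -(fun i => (g₀ i : ℝ)) := by
          funext i
          simp only [Pi.neg_apply, Int.cast_neg]
        rw [heqn]
        exact W.neg_mem hmemg₀
      · intro h0
        apply hg₀0
        funext i
        have := congrFun h0 i
        simp only [Pi.neg_apply, Int.cast_neg, Pi.zero_apply, neg_eq_zero] at this
        simpa using this
      · intro h' hh'W hh'0 hsub
        have hset : {i | ((-g₀) i : ℝ) ≠ 0} = {i | (g₀ i : ℝ) ≠ 0} := by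
          ext i; simp
        rw [hset] at hsub ⊢
        exact helem.2.2 h' hh'W hh'0 hsub
    · have : (fun i => ((-g₀) i).natAbs) = fun i => (g₀ i).natAbs := by
        funext i; simp
      rw [this]
      exact hgcd1
    · funext i
      simp only [Pi.neg_apply, Int.cast_neg, Pi.smul_apply, smul_eq_mul]
      have := congrFun hc i
      simp only [Pi.smul_apply, smul_eq_mul] at this
      rw [this]; ring
  · exact ⟨g₀, c₀, hpos, ⟨helem, hgcd1⟩, hc⟩


lemma intElementary_inGraver {m n : ℕ} (A : Matrix (Fin m) (Fin n) ℤ) {g : Fin n → ℤ}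
    (hg : IsIntElementary (LinearMap.ker (A.map (Int.cast : ℤ → ℝ)).mulVecLin) g) :
    InGraverBasis A g := by
  refine ⟨(cast_mem_ker_iff A g).mp hg.1.1, ?_, ?_⟩
  · intro h0
    exact hg.1.2.1 (by rw [h0]; funext i; simp)
  · intro h hker hh0 hne hconf hall
    apply hne
    exact intElementary_unique hg ((cast_mem_ker_iff A h).mpr hker) hh0 hconf hall

lemma abs_list_sum_le (l : List ℝ) : |l.sum| ≤ (l.map abs).sum := by
  induction l with
  | nil => simp
  | cons a t ih => simpa using (abs_add_le a t.sum).trans (by linarith)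

lemma graver_pointwise_bound {m n : ℕ} (A : Matrix (Fin m) (Fin n) ℤ) :
    ∀ k ∈ {k : ℕ | ∃ g : Fin n → ℤ, InGraverBasis A g ∧
      k = Finset.univ.sup fun i => (g i).natAbs},
      k ≤ n * barKappa (LinearMap.ker (A.map (Int.cast : ℤ → ℝ)).mulVecLin) := by
  classical
  set W := LinearMap.ker (A.map (Int.cast : ℤ → ℝ)).mulVecLin with hWdef
  rintro k ⟨g, hGrav, hk⟩
  set v : Fin n → ℝ := fun i => (g i : ℝ) with hv
  have hvW : v ∈ W := (cast_mem_ker_iff A g).mpr hGrav.1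
  have hv0 : v ≠ 0 := cast_fun_ne_zero hGrav.2.1
  obtain ⟨i₁, hi₁⟩ := Function.ne_iff.mp hGrav.2.1
  have hn : 0 < n := i₁.pos
  set κ : ℕ := barKappa W with hκ
  have hκ_ub : ∀ h : Fin n → ℤ, IsIntElementary W h → ∀ i, (h i).natAbs ≤ κ := by
    intro h hInt i
    have h1 : (Finset.univ.sup fun i => (h i).natAbs) ≤ κ := by
      rw [hκ, barKappa]
      exact le_csSup (bddAbove_kappaSet W) ⟨h, hInt, rfl⟩
    exact le_trans (Finset.le_sup (f := fun i => (h i).natAbs) (Finset.mem_univ i)) h1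
  by_cases hEx : ∃ h : Fin n → ℤ, IsIntElementary W h ∧
      (∀ i, h i ≠ 0 → 0 < g i * h i) ∧ (∀ i, |h i| ≤ |g i|)
  · obtain ⟨h, hInt, hconf, hle⟩ := hEx
    have hker : A.mulVec h = 0 := (cast_mem_ker_iff A h).mp hInt.1.1
    have hh0 : h ≠ 0 := by
      intro h0
      exact hInt.1.2.1 (by rw [h0]; funext i; simp)
    have heq : h = g := by
      by_contra hne
      exact hGrav.2.2 h hker hh0 hne hconf hle
    subst heq
    have h2 : k ≤ κ := by
      rw [hk]
      apply Finset.sup_le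
      intro i _
      exact hκ_ub h hInt i
    exact le_trans h2 (Nat.le_mul_of_pos_left κ hn)
  · obtain ⟨l, hlne, hllen, hlsum, hlprop⟩ :=
      conformal_decomp (W := W) (suppF v).card v hvW hv0 le_rfl
    have hclaim : ∀ p ∈ l, ∀ i, |p.2 * p.1 i| ≤ (κ : ℝ) := by
      intro p hp i
      obtain ⟨hel, hpos, hconfp, hkeyp⟩ := hlprop p hp
      obtain ⟨h, c, hcpos, hInt, hcast⟩ := elementary_int_normalize A hel
      have hcasti : ∀ i', ((h i' : ℤ) : ℝ) = c * p.1 i' := fun i' => by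
        have := congrFun hcast i'
        simpa using this
      have hβ : p.2 / c < 1 := by
        by_contra hβ1
        push_neg at hβ1
        have hcle : c ≤ p.2 := (one_le_div hcpos).mp hβ1
        apply hEx
        refine ⟨h, hInt, ?_, ?_⟩
        · intro i' hi'
          have hp1 : p.1 i' ≠ 0 := by
            intro h0
            apply hi'
            have := hcasti i'
            rw [h0, mul_zero] at this
            exact_mod_cast this
          have h1 : 0 < v i' * p.1 i' := hconfp i' hp1
          have h2 : 0 < (g i' : ℝ) * (h i' : ℝ) := by
            rw [hcasti i']
            calc (0:ℝ) < c * (v i' * p.1 i') := by positivity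
              _ = (g i' : ℝ) * (c * p.1 i') := by rw [hv]; ring
          exact_mod_cast h2
        · intro i'
          have h1 : |(h i' : ℝ)| ≤ |(g i' : ℝ)| := by
            rw [hcasti i', abs_mul, abs_of_pos hcpos]
            calc c * |p.1 i'| ≤ p.2 * |p.1 i'| :=
                  mul_le_mul_of_nonneg_right hcle (abs_nonneg _)
              _ = |p.2 * p.1 i'| := by rw [abs_mul, abs_of_pos hpos]
              _ ≤ |v i'| := hkeyp i'
              _ = |(g i' : ℝ)| := by rw [hv]
          exact_mod_cast h1
      have hhi : |(h i : ℝ)| ≤ (κ : ℝ) := by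
        have h1 : ((h i).natAbs : ℝ) ≤ (κ : ℝ) := by
          exact_mod_cast hκ_ub h hInt i
        rwa [Nat.cast_natAbs, Int.cast_abs] at h1
      have heq2 : p.2 * p.1 i = (p.2 / c) * (h i : ℝ) := by
        rw [hcasti i]
        field_simp
      rw [heq2, abs_mul, abs_of_pos (div_pos hpos hcpos)]
      calc (p.2 / c) * |(h i : ℝ)| ≤ 1 * |(h i : ℝ)| :=
            mul_le_mul_of_nonneg_right (le_of_lt hβ) (abs_nonneg _)
        _ = |(h i : ℝ)| := one_mul _
        _ ≤ (κ : ℝ) := hhi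
    have hbound : ∀ i, |v i| ≤ (n : ℝ) * (κ : ℝ) := by
      intro i
      have h1 : v i = (l.map fun p => p.2 * p.1 i).sum := by
        rw [hlsum, list_sum_apply, List.map_map]
        congr 1
      have h2 : |v i| ≤ ((l.map fun p => p.2 * p.1 i).map abs).sum := by
        rw [h1]; exact abs_list_sum_le _
      have h3 : ((l.map fun p => p.2 * p.1 i).map abs).sum ≤
          ((l.map fun p => p.2 * p.1 i).map abs).length • (κ : ℝ) := by
        apply List.sum_le_card_nsmul
        intro x hx
        simp only [List.mem_map] at hx
        obtain ⟨y, ⟨p, hp, hpy⟩, hxy⟩ := hx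
        rw [← hxy, ← hpy]
        exact hclaim p hp i
      have h4 : ((l.map fun p => p.2 * p.1 i).map abs).length = l.length := by simp
      have h5 : l.length ≤ n := by
        calc l.length ≤ (suppF v).card := hllen
          _ ≤ Fintype.card (Fin n) := Finset.card_le_univ _
          _ = n := Fintype.card_fin n
      calc |v i| ≤ ((l.map fun p => p.2 * p.1 i).map abs).sum := h2
        _ ≤ ((l.map fun p => p.2 * p.1 i).map abs).length • (κ : ℝ) := h3
        _ = (l.length : ℝ) * (κ : ℝ) := by rw [h4, nsmul_eq_mul]
        _ ≤ (n : ℝ) * (κ : ℝ) := by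
            apply mul_le_mul_of_nonneg_right _ (Nat.cast_nonneg _)
            exact_mod_cast h5
    rw [hk]
    apply Finset.sup_le
    intro i _
    have h1 : ((g i).natAbs : ℝ) ≤ ((n * κ : ℕ) : ℝ) := by
      calc ((g i).natAbs : ℝ) = |(g i : ℝ)| := by
            rw [Nat.cast_natAbs]; push_cast; ring
        _ = |v i| := by rw [hv]
        _ ≤ (n : ℝ) * (κ : ℝ) := hbound i
        _ = ((n * κ : ℕ) : ℝ) := by push_cast; ring
    exact_mod_cast h1

/-- `κ̄_A ≤ 𝔤_∞(A) ≤ n · κ̄_A`. -/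
theorem barKappa_graver_bounds {m n : ℕ} (A : Matrix (Fin m) (Fin n) ℤ) :
    barKappa (LinearMap.ker (A.map (Int.cast : ℤ → ℝ)).mulVecLin) ≤ graverMaxInf A ∧
      graverMaxInf A ≤ n * barKappa (LinearMap.ker (A.map (Int.cast : ℤ → ℝ)).mulVecLin) := by
  classical
  have key := graver_pointwise_bound A
  have hbdd2 : BddAbove {k : ℕ | ∃ g : Fin n → ℤ, InGraverBasis A g ∧
      k = Finset.univ.sup fun i => (g i).natAbs} :=
    ⟨n * barKappa (LinearMap.ker (A.map (Int.cast : ℤ → ℝ)).mulVecLin), fun k hk => key k hk⟩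
  constructor
  · rw [barKappa, graverMaxInf]
    apply csSup_le'
    rintro k ⟨g, hg, hk⟩
    exact le_csSup hbdd2 ⟨g, intElementary_inGraver A hg, hk⟩
  · rw [graverMaxInf]
    exact csSup_le' fun k hk => key k hk
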